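/- Let t ≥ 1 be an integer and let G be a (2t+1)-regular finite multigraph with a 1-factor F such that G − F is bipartite with bipartition classes A and B. Then the function w defined by w(v) = 2t for v ∈ A and w(v) = −2t for v ∈ B is a balanced valuation of G. -/

import Mathlib

structure Multigraph where
  V : Type
  E : Type
  [finV : Finite V]
  [finE : Finite E]
  fst : E → V
  snd : E → V

attribute [instance] Multigraph.finV Multigraph.finE

namespace Multigraph

/-- The degree of a vertex (loops count twice). -/
noncomputable def degree (G : Multigraph) (v : G.V) : ℕ :=
  Nat.card {e : G.E // G.fst e = v} + Nat.card {e : G.E // G.snd e = v}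

def IsRegular (G : Multigraph) (k : ℕ) : Prop := ∀ v, G.degree v = k

/-- `φ` is a nowhere-zero `r`-flow: values have absolute value in `[1, r-1]`
(the sign of `φ e` encodes the chosen orientation of `e`), and flow is conserved
at every vertex. -/
def IsNowhereZeroFlow (G : Multigraph) (r : ℝ) (φ : G.E → ℝ) : Prop :=
  (∀ e, 1 ≤ |φ e| ∧ |φ e| ≤ r - 1) ∧
  ∀ v : G.V, (∑ᶠ e ∈ {e : G.E | G.fst e = v}, φ e) = ∑ᶠ e ∈ {e : G.E | G.snd e = v}, φ e

def HasNowhereZeroFlow (G : Multigraph) (r : ℝ) : Prop := ∃ φ, G.IsNowhereZeroFlow r φ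

/-- The circular flow number, `⊤` if `G` has no nowhere-zero flow. -/
noncomputable def flowNumber (G : Multigraph) : EReal :=
  sInf {x : EReal | ∃ r : ℝ, x = (r : EReal) ∧ G.HasNowhereZeroFlow r}

def Bipartite (G : Multigraph) : Prop :=
  ∃ c : G.V → Bool, ∀ e, c (G.fst e) ≠ c (G.snd e)

def IsOneFactor (G : Multigraph) (F : Set G.E) : Prop :=
  (∀ e ∈ F, G.fst e ≠ G.snd e) ∧
  ∀ v : G.V, ∃! e : G.E, e ∈ F ∧ (G.fst e = v ∨ G.snd e = v)

/-- `G - F` is bipartite. -/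
def BipartiteWithout (G : Multigraph) (F : Set G.E) : Prop :=
  ∃ c : G.V → Bool, ∀ e ∉ F, c (G.fst e) ≠ c (G.snd e)

def IsProperEdgeColoring (G : Multigraph) {n : ℕ} (c : G.E → Fin n) : Prop :=
  ∀ e₁ e₂ : G.E, e₁ ≠ e₂ →
    (G.fst e₁ = G.fst e₂ ∨ G.fst e₁ = G.snd e₂ ∨ G.snd e₁ = G.fst e₂ ∨ G.snd e₁ = G.snd e₂) →
    c e₁ ≠ c e₂

noncomputable def edgeChromaticNumber (G : Multigraph) : ℕ :=
  sInf {n : ℕ | ∃ c : G.E → Fin n, G.IsProperEdgeColoring c}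

def edgeBoundary (G : Multigraph) (X : Set G.V) : Set G.E :=
  {e | (G.fst e ∈ X) ≠ (G.snd e ∈ X)}

def IsBalancedValuation (G : Multigraph) (w : G.V → ℝ) : Prop :=
  ∀ X : Set G.V, |∑ᶠ v ∈ X, w v| ≤ (G.edgeBoundary X).ncard

end Multigraph

open scoped Classical in
theorem balancedValuation_of_one_factor_bipartite_complement (t : ℕ) (ht : 1 ≤ t)
    (G : Multigraph) (hreg : G.IsRegular (2 * t + 1))
    (F : Set G.E) (hF : G.IsOneFactor F)
    (A B : Set G.V)
    (hpart : ∀ v : G.V, (v ∈ A ∧ v ∉ B) ∨ (v ∈ B ∧ v ∉ A))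
    (hbip : ∀ e ∉ F, (G.fst e ∈ A ∧ G.snd e ∈ B) ∨ (G.fst e ∈ B ∧ G.snd e ∈ A)) :
    G.IsBalancedValuation (fun v => if v ∈ A then (2 * (t : ℝ)) else -(2 * (t : ℝ))) := by

  classical
  letI : Fintype G.V := Fintype.ofFinite _
  letI : Fintype G.E := Fintype.ofFinite _
  intro X
  set sgn : G.V → ℝ := fun v => if v ∈ A then 1 else -1 with hsgn
  have hXfin : X.Finite := Set.toFinite X
  set XF : Finset G.V := hXfin.toFinset with hXF
  set nF : Finset G.E := Finset.univ.filter (fun e => e ∉ F) with hnF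
  -- the per-vertex F-edge count is 1
  have hFone : ∀ v : G.V,
      (Finset.univ.filter (fun e => e ∈ F ∧ G.fst e = v)).card
      + (Finset.univ.filter (fun e => e ∈ F ∧ G.snd e = v)).card = 1 := by
    intro v
    obtain ⟨e₀, ⟨he₀F, he₀v⟩, huniq⟩ := hF.2 v
    set S1 := Finset.univ.filter (fun e => e ∈ F ∧ G.fst e = v) with hS1
    set S2 := Finset.univ.filter (fun e => e ∈ F ∧ G.snd e = v) with hS2
    have hun : S1 ∪ S2 = {e₀} := by
      ext e
      simp only [Finset.mem_union, hS1, hS2, Finset.mem_filter, Finset.mem_univ, true_and,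
        Finset.mem_singleton]
      constructor
      · rintro (⟨hf, hv⟩ | ⟨hf, hv⟩)
        · exact huniq e ⟨hf, Or.inl hv⟩
        · exact huniq e ⟨hf, Or.inr hv⟩
      · rintro rfl
        rcases he₀v with h | h
        · exact Or.inl ⟨he₀F, h⟩
        · exact Or.inr ⟨he₀F, h⟩
    have hint : S1 ∩ S2 = ∅ := by
      ext e
      simp only [Finset.mem_inter, hS1, hS2, Finset.mem_filter, Finset.mem_univ, true_and,
        Finset.notMem_empty, iff_false]
      rintro ⟨⟨hf, h1⟩, ⟨-, h2⟩⟩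
      exact hF.1 e hf (h1.trans h2.symm)
    have := Finset.card_union_add_card_inter S1 S2
    rw [hun, hint] at this
    simpa using this.symm
  -- non-F degrees
  have hdeg : ∀ v : G.V,
      (nF.filter (fun e => G.fst e = v)).card + (nF.filter (fun e => G.snd e = v)).card
        = 2 * t := by
    intro v
    have hreg' := hreg v
    unfold Multigraph.degree at hreg'
    have h1 : Nat.card {e : G.E // G.fst e = v}
        = (Finset.univ.filter (fun e => G.fst e = v)).card := by
      rw [Nat.card_eq_fintype_card, Fintype.card_subtype]
    have h2 : Nat.card {e : G.E // G.snd e = v}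
        = (Finset.univ.filter (fun e => G.snd e = v)).card := by
      rw [Nat.card_eq_fintype_card, Fintype.card_subtype]
    rw [h1, h2] at hreg'
    have hsplit1 : (Finset.univ.filter (fun e => G.fst e = v)).card
        = (Finset.univ.filter (fun e => e ∈ F ∧ G.fst e = v)).card
          + (nF.filter (fun e => G.fst e = v)).card := by
      rw [hnF, Finset.filter_filter]
      rw [← Finset.card_filter_add_card_filter_not (s := Finset.univ.filter
          (fun e => G.fst e = v)) (p := fun e => e ∈ F), Finset.filter_filter,
        Finset.filter_filter]
      congr 1
      · congr 1; ext e; simp only [Finset.mem_filter]; tauto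
      · congr 1; ext e; simp only [Finset.mem_filter]; tauto
    have hsplit2 : (Finset.univ.filter (fun e => G.snd e = v)).card
        = (Finset.univ.filter (fun e => e ∈ F ∧ G.snd e = v)).card
          + (nF.filter (fun e => G.snd e = v)).card := by
      rw [hnF, Finset.filter_filter]
      rw [← Finset.card_filter_add_card_filter_not (s := Finset.univ.filter
          (fun e => G.snd e = v)) (p := fun e => e ∈ F), Finset.filter_filter,
        Finset.filter_filter]
      congr 1
      · congr 1; ext e; simp only [Finset.mem_filter]; tauto
      · congr 1; ext e; simp only [Finset.mem_filter]; tauto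
    have := hFone v
    omega
  -- rewrite the finsum
  have hsum : (∑ᶠ v ∈ X, (if v ∈ A then (2*(t:ℝ)) else -(2*(t:ℝ))))
      = ∑ v ∈ XF, sgn v * (2*(t:ℝ)) := by
    rw [← hXfin.coe_toFinset, finsum_mem_coe_finset]
    apply Finset.sum_congr rfl
    intro v _
    by_cases hv : v ∈ A <;> simp [hsgn, hv] <;> ring
  -- the edge-sum identity
  have hT1 : ∀ (f : G.E → G.V),
      (∑ e ∈ nF, (if f e ∈ X then sgn (f e) else 0))
        = ∑ v ∈ XF, sgn v * (nF.filter (fun e => f e = v)).card := by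
    intro f
    have step : ∀ e, (if f e ∈ X then sgn (f e) else 0)
        = ∑ v ∈ XF, (if f e = v then sgn v else 0) := by
      intro e
      rw [Finset.sum_ite_eq XF (f e) sgn]
      congr 1
      simp only [hXF, Set.Finite.mem_toFinset, eq_iff_iff]
    rw [Finset.sum_congr rfl (fun e _ => step e), Finset.sum_comm]
    apply Finset.sum_congr rfl
    intro v _
    rw [← Finset.sum_filter, Finset.sum_const, nsmul_eq_mul, mul_comm]
  have hT : (∑ e ∈ nF, ((if G.fst e ∈ X then sgn (G.fst e) else 0)
        + (if G.snd e ∈ X then sgn (G.snd e) else 0)))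
      = ∑ v ∈ XF, sgn v * (2*(t:ℝ)) := by
    rw [Finset.sum_add_distrib, hT1 G.fst, hT1 G.snd, ← Finset.sum_add_distrib]
    apply Finset.sum_congr rfl
    intro v _
    rw [← mul_add]
    congr 1
    rw [← Nat.cast_add, hdeg v]
    push_cast
    ring
  -- per-edge bound
  have hedge : ∀ e ∈ nF,
      |(if G.fst e ∈ X then sgn (G.fst e) else 0)
        + (if G.snd e ∈ X then sgn (G.snd e) else 0)|
      ≤ (if e ∈ G.edgeBoundary X then (1:ℝ) else 0) := by
    intro e he
    have heF : e ∉ F := by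
      rw [hnF] at he; simpa using he
    have hops : sgn (G.fst e) + sgn (G.snd e) = 0 := by
      rcases hbip e heF with ⟨h1, h2⟩ | ⟨h1, h2⟩
      · have h2' : G.snd e ∉ A := by
          rcases hpart (G.snd e) with ⟨_, hb⟩ | ⟨_, hb⟩
          · exact absurd h2 hb
          · exact hb
        simp [hsgn, h1, h2']
      · have h1' : G.fst e ∉ A := by
          rcases hpart (G.fst e) with ⟨_, hb⟩ | ⟨_, hb⟩
          · exact absurd h1 hb
          · exact hb
        have h2' : G.snd e ∈ A := by
          rcases hpart (G.snd e) with ⟨ha, _⟩ | ⟨hb, hb'⟩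
          · exact ha
          · exact absurd h2 hb'
        simp [hsgn, h1', h2']
    have habs : ∀ v, |sgn v| = 1 := by
      intro v; by_cases hv : v ∈ A <;> simp [hsgn, hv]
    by_cases h1 : G.fst e ∈ X <;> by_cases h2 : G.snd e ∈ X
    · have hb : e ∉ G.edgeBoundary X := by
        simp [Multigraph.edgeBoundary, h1, h2]
      simp only [if_pos h1, if_pos h2, hops, abs_zero, if_neg hb]
      exact le_refl 0
    · have hb : e ∈ G.edgeBoundary X := by
        simp [Multigraph.edgeBoundary, h1, h2]
      simp only [if_pos h1, if_neg h2, add_zero, if_pos hb, habs]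
      exact le_refl 1
    · have hb : e ∈ G.edgeBoundary X := by
        simp [Multigraph.edgeBoundary, h1, h2]
      simp only [if_neg h1, if_pos h2, zero_add, if_pos hb, habs]
      exact le_refl 1
    · have hb : e ∉ G.edgeBoundary X := by
        simp [Multigraph.edgeBoundary, h1, h2]
      simp [if_neg h1, if_neg h2, if_neg hb]
  -- assemble
  have hBfin : (G.edgeBoundary X).Finite := Set.toFinite _
  have hcard : (∑ e ∈ nF, (if e ∈ G.edgeBoundary X then (1:ℝ) else 0))
      ≤ ((G.edgeBoundary X).ncard : ℝ) := by
    rw [← Finset.sum_filter, Finset.sum_const, nsmul_eq_mul, mul_one,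
      Set.ncard_eq_toFinset_card _ hBfin]
    have hsub : nF.filter (fun e => e ∈ G.edgeBoundary X) ⊆ hBfin.toFinset := by
      intro e he
      rw [Set.Finite.mem_toFinset]
      exact (Finset.mem_filter.mp he).2
    exact_mod_cast Finset.card_le_card hsub
  calc |∑ᶠ v ∈ X, (if v ∈ A then (2*(t:ℝ)) else -(2*(t:ℝ)))|
      = |∑ e ∈ nF, ((if G.fst e ∈ X then sgn (G.fst e) else 0)
          + (if G.snd e ∈ X then sgn (G.snd e) else 0))| := by rw [hsum, hT]
    _ ≤ ∑ e ∈ nF, |(if G.fst e ∈ X then sgn (G.fst e) else 0)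
          + (if G.snd e ∈ X then sgn (G.snd e) else 0)| := Finset.abs_sum_le_sum_abs _ _
    _ ≤ ∑ e ∈ nF, (if e ∈ G.edgeBoundary X then (1:ℝ) else 0) :=
        Finset.sum_le_sum hedge
    _ ≤ ((G.edgeBoundary X).ncard : ℝ) := hcard
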